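/- Let L₁,…,L_{d²} be Hermitian d×d matrices forming a basis of the d×d complex matrices, with [L_r, L_s] = ∑_t C_{rst} L_t, and suppose the structure constants C_{rst} are completely antisymmetric in all three indices. Then ∑_r Tr(L_r)·L_r = κ·I where κ = (1/d)·∑_r (Tr L_r)² > 0. -/

import Mathlib

open Matrix

theorem stmt13 (d : ℕ) (hd : 0 < d) (L : Fin (d^2) → Matrix (Fin d) (Fin d) ℂ)
    (hherm : ∀ r, (L r).IsHermitian) (hindep : LinearIndependent ℂ L)
    (hspan : ⊤ ≤ Submodule.span ℂ (Set.range L))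
    (C : Fin (d^2) → Fin (d^2) → Fin (d^2) → ℂ)
    (hC : ∀ r s, L r * L s - L s * L r = ∑ t, C r s t • L t)
    (hanti1 : ∀ r s t, C r s t = -C s r t)
    (hanti2 : ∀ r s t, C r s t = -C r t s) :
    ∃ κ : ℝ, 0 < κ ∧ (κ : ℂ) = (1 / (d : ℂ)) * ∑ r, ((L r).trace) ^ 2 ∧
      ∑ r, (L r).trace • L r = (κ : ℂ) • (1 : Matrix (Fin d) (Fin d) ℂ) := by
  have hdC : (d : ℂ) ≠ 0 := Nat.cast_ne_zero.mpr hd.ne'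
  -- traces are real
  have htr_real : ∀ r, ((L r).trace : ℂ) = (((L r).trace.re : ℝ) : ℂ) := by
    intro r
    have h1 : star (L r).trace = (L r).trace := by
      rw [← Matrix.trace_conjTranspose, (hherm r).eq]
    exact (Complex.conj_eq_iff_re.mp h1).symm
  set t : Fin (d^2) → ℝ := fun r => (L r).trace.re with ht
  -- trace identity: ∑ r, C a b r * trace (L r) = 0
  have htrace0 : ∀ a b, ∑ r, C a b r * (L r).trace = 0 := by
    intro a b
    have := congrArg Matrix.trace (hC a b)
    simpa [Matrix.trace_sub, Matrix.trace_sum, Matrix.trace_smul, smul_eq_mul,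
      Matrix.trace_mul_comm (L a) (L b)] using this.symm
  -- coefficient identity: ∑ r, trace (L r) * C r s t = 0
  have hcoef : ∀ s u, ∑ r, (L r).trace * C r s u = 0 := by
    intro s u
    have h1 : ∀ r, C r s u = -C u s r := fun r => by
      rw [hanti2 r s u, hanti1 r u s, hanti2 u r s]; ring
    calc ∑ r, (L r).trace * C r s u = -(∑ r, C u s r * (L r).trace) := by
          rw [← Finset.sum_neg_distrib]
          exact Finset.sum_congr rfl fun r _ => by rw [h1 r]; ring
      _ = 0 := by rw [htrace0]; ring
  set A : Matrix (Fin d) (Fin d) ℂ := ∑ r, (L r).trace • L r with hA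
  -- A commutes with each L s
  have hcommL : ∀ s, A * L s = L s * A := by
    intro s
    have step : ∀ r, (L r).trace • L r * L s - L s * ((L r).trace • L r)
        = ∑ u, ((L r).trace * C r s u) • L u := by
      intro r
      rw [Matrix.smul_mul, Matrix.mul_smul, ← smul_sub, hC r s, Finset.smul_sum]
      simp only [smul_smul]
    have key : A * L s - L s * A = ∑ u, (∑ r, (L r).trace * C r s u) • L u := by
      calc A * L s - L s * A
          = ∑ r, ((L r).trace • L r * L s - L s * ((L r).trace • L r)) := by
            rw [hA, Finset.sum_mul, Finset.mul_sum, ← Finset.sum_sub_distrib]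
        _ = ∑ r, ∑ u, ((L r).trace * C r s u) • L u :=
            Finset.sum_congr rfl fun r _ => step r
        _ = ∑ u, ∑ r, ((L r).trace * C r s u) • L u := Finset.sum_comm
        _ = ∑ u, (∑ r, (L r).trace * C r s u) • L u :=
            Finset.sum_congr rfl fun u _ => (Finset.sum_smul).symm
    have : A * L s - L s * A = 0 := by
      rw [key]
      exact Finset.sum_eq_zero fun u _ => by rw [hcoef s u, zero_smul]
    exact sub_eq_zero.mp this
  -- A commutes with every matrix
  have hcommAll : ∀ M : Matrix (Fin d) (Fin d) ℂ, A * M = M * A := by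
    intro M
    have hM : M ∈ Submodule.span ℂ (Set.range L) := hspan Submodule.mem_top
    induction hM using Submodule.span_induction with
    | mem x hx => obtain ⟨s, rfl⟩ := hx; exact hcommL s
    | zero => simp
    | add x y _ _ hx hy => rw [Matrix.mul_add, Matrix.add_mul, hx, hy]
    | smul c x _ hx => rw [Matrix.mul_smul, Matrix.smul_mul, hx]
  obtain ⟨c, hc⟩ := Matrix.mem_range_scalar_of_commute_single
    (M := A) (fun i j _ => (hcommAll _).symm)
  have hc1 : A = c • (1 : Matrix (Fin d) (Fin d) ℂ) := by
    rw [← hc]; ext i j; simp [Matrix.scalar_apply, Matrix.smul_apply,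
      Matrix.one_apply, Matrix.diagonal_apply]
  -- trace computation
  have htrA : A.trace = ∑ r, ((L r).trace) ^ 2 := by
    rw [hA, Matrix.trace_sum]
    exact Finset.sum_congr rfl fun r _ => by rw [Matrix.trace_smul, smul_eq_mul, sq]
  have htrA' : A.trace = c * d := by
    rw [hc1, Matrix.trace_smul, Matrix.trace_one, smul_eq_mul]
    simp
  have hcval : c = (1 / (d : ℂ)) * ∑ r, ((L r).trace) ^ 2 := by
    rw [← htrA, htrA']
    field_simp
  -- c is real and positive
  have hsum_real : (∑ r, ((L r).trace) ^ 2) = ((∑ r, (t r)^2 : ℝ) : ℂ) := by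
    push_cast
    exact Finset.sum_congr rfl fun r _ => by rw [htr_real r]
  have hsum_pos : 0 < ∑ r, (t r)^2 := by
    have hnn : 0 ≤ ∑ r, (t r)^2 := Finset.sum_nonneg fun r _ => sq_nonneg _
    rcases hnn.lt_or_eq with h | h
    · exact h
    · exfalso
      have hallz : ∀ r, (L r).trace = 0 := by
        intro r
        have h0 : t r ^ 2 = 0 :=
          (Finset.sum_eq_zero_iff_of_nonneg (fun r _ => sq_nonneg (t r))).mp h.symm
            r (Finset.mem_univ r)
        have htz : (L r).trace.re = 0 := pow_eq_zero_iff (n := 2) (by norm_num) |>.mp h0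
        rw [htr_real r, htz]; norm_num
      -- trace vanishes on span, but trace 1 = d ≠ 0
      have h1mem : (1 : Matrix (Fin d) (Fin d) ℂ) ∈ Submodule.span ℂ (Set.range L) :=
        hspan Submodule.mem_top
      have hker : Submodule.span ℂ (Set.range L) ≤
          LinearMap.ker (Matrix.traceLinearMap (Fin d) ℂ ℂ) := by
        rw [Submodule.span_le]
        rintro x ⟨r, rfl⟩
        simpa using hallz r
      have := hker h1mem
      simp only [LinearMap.mem_ker, Matrix.traceLinearMap_apply, Matrix.trace_one,
        Fintype.card_fin] at this
      exact hdC this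
  refine ⟨(1 / d) * ∑ r, (t r)^2, ?_, ?_, ?_⟩
  · positivity
  · rw [hsum_real]
    push_cast
    ring
  · have : ((((1 : ℝ) / d) * ∑ r, (t r)^2 : ℝ) : ℂ) = c := by
      rw [hcval, hsum_real]; push_cast; ring
    rw [hc1, ← this]
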